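/- Let Γ be a distance-biregular graph with combinatorial Laplacian L, and let L^# be the group inverse of L. Then for every ℓ ∈ {0,1}, every y ∈ V_ℓ, and every vertex x, L^#(x,y) = (1/n)·Σ_{j=d(x,y)+1}^{D_ℓ} (n − B_{ℓ,j−1})/(k_{ℓ,j}·c_{ℓ,j}) − (1/n²)·Σ_{j=1}^{D_ℓ} B_{ℓ,j−1}·(n − B_{ℓ,j−1})/(k_{ℓ,j}·c_{ℓ,j}). -/

import Mathlib

open Finset SimpleGraph

lemma fin2_aux : ∀ a b c : Fin 2, a ≠ b → (a = c ↔ ¬ b = c) := by decide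

lemma fin2_iff : ∀ a b c : Fin 2, ((a = b) ↔ (a = c)) → b = c := by decide

lemma walk_parity {V : Type} {G : SimpleGraph V} {σ : V → Fin 2}
    (hbip : ∀ x y : V, G.Adj x y → σ x ≠ σ y) :
    ∀ {x y : V} (p : G.Walk x y), (σ x = σ y ↔ Even p.length) := by
  intro x y p
  induction p with
  | nil => simp
  | @cons a u v h q ih =>
    simp only [Walk.length_cons, Nat.even_add_one, ← ih]
    exact fin2_aux _ _ _ (hbip _ _ h)

lemma dist_parity {V : Type} {G : SimpleGraph V} {σ : V → Fin 2}
    (hbip : ∀ x y : V, G.Adj x y → σ x ≠ σ y) (hconn : G.Connected) (x y : V) :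
    (σ x = σ y ↔ Even (G.dist x y)) := by
  obtain ⟨p, hp⟩ := (hconn x y).exists_walk_length_eq_dist
  rw [← hp]; exact walk_parity hbip p

lemma dist_step {V : Type} {G : SimpleGraph V} {σ : V → Fin 2}
    (hbip : ∀ x y : V, G.Adj x y → σ x ≠ σ y) (hconn : G.Connected) (y x z : V)
    (hadj : G.Adj x z) :
    G.dist y z = G.dist y x + 1 ∨ G.dist y x = G.dist y z + 1 := by
  have hxz : G.dist x z = 1 := dist_eq_one_iff_adj.mpr hadj
  have hzx : G.dist z x = 1 := dist_eq_one_iff_adj.mpr hadj.symm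
  have t1 : G.dist y z ≤ G.dist y x + 1 := by
    have := hconn.dist_triangle (u := y) (v := x) (w := z); omega
  have t2 : G.dist y x ≤ G.dist y z + 1 := by
    have := hconn.dist_triangle (u := y) (v := z) (w := x); omega
  have p1 := dist_parity hbip hconn y x
  have p2 := dist_parity hbip hconn y z
  have hne : G.dist y z ≠ G.dist y x := by
    intro hEq
    rw [hEq] at p2
    exact hbip x z hadj (fin2_iff _ _ _ (p1.trans p2.symm))
  omega


lemma closer_neighbor {V : Type} {G : SimpleGraph V} (hconn : G.Connected) (a z : V)
    (h : G.dist a z ≠ 0) : ∃ w, G.Adj z w ∧ G.dist a w + 1 = G.dist a z := by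
  obtain ⟨p, hp⟩ := (hconn z a).exists_walk_length_eq_dist
  cases p with
  | nil => simp [SimpleGraph.dist_self] at h
  | @cons _ w _ hadj q =>
    refine ⟨w, hadj, ?_⟩
    rw [Walk.length_cons] at hp
    have h1 : G.dist w a ≤ q.length := dist_le q
    have h2 : G.dist z a ≤ G.dist z w + G.dist w a := hconn.dist_triangle
    have h3 : G.dist z w ≤ 1 := by
      rw [dist_eq_one_iff_adj.mpr hadj]
    rw [SimpleGraph.dist_comm (G:=G) (u:=a) (v:=z), SimpleGraph.dist_comm (G:=G) (u:=a) (v:=w)]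
    omega

lemma exists_intermediate {V : Type} {G : SimpleGraph V} (hconn : G.Connected) :
    ∀ (m : ℕ) (x y : V), m ≤ G.dist x y →
      ∃ z, G.dist x z = m ∧ m + G.dist z y = G.dist x y := by
  intro m
  induction m with
  | zero => intro x y _; exact ⟨x, by simp⟩
  | succ m ih =>
    intro x y hm
    obtain ⟨z, hz1, hz2⟩ := ih x y (by omega)
    have hzy : G.dist z y ≠ 0 := by omega
    rw [SimpleGraph.dist_comm (G:=G)] at hzy
    obtain ⟨w, hadj, hw⟩ := closer_neighbor hconn y z hzy
    refine ⟨w, ?_, ?_⟩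
    · have h1 : G.dist x w ≤ G.dist x z + G.dist z w := hconn.dist_triangle
      have h2 : G.dist x y ≤ G.dist x w + G.dist w y := hconn.dist_triangle
      have h3 : G.dist z w = 1 := dist_eq_one_iff_adj.mpr hadj
      have h4 : G.dist y z = G.dist z y := SimpleGraph.dist_comm
      have h5 : G.dist y w = G.dist w y := SimpleGraph.dist_comm
      omega
    · have h1 : G.dist x w ≤ G.dist x z + G.dist z w := hconn.dist_triangle
      have h2 : G.dist x y ≤ G.dist x w + G.dist w y := hconn.dist_triangle
      have h3 : G.dist z w = 1 := dist_eq_one_iff_adj.mpr hadj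
      have h4 : G.dist y z = G.dist z y := SimpleGraph.dist_comm
      have h5 : G.dist y w = G.dist w y := SimpleGraph.dist_comm
      omega

lemma swap_sum (D : ℕ) (u g : ℕ → ℝ) :
    ∑ t ∈ Finset.range (D+1), u t * ∑ j ∈ Finset.Icc (t+1) D, g j
      = ∑ j ∈ Finset.Icc 1 D, (∑ t ∈ Finset.range j, u t) * g j := by
  have key : ∀ t, u t * ∑ j ∈ Finset.Icc (t+1) D, g j
      = ∑ j ∈ Finset.range (D+1), if t < j then u t * g j else 0 := by
    intro t
    rw [Finset.mul_sum]
    rw [show Finset.Icc (t+1) D = (Finset.range (D+1)).filter (fun j => t < j) by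
      ext j; simp [Finset.mem_Icc, Finset.mem_range, Finset.mem_filter]; omega]
    rw [Finset.sum_filter]
  simp_rw [key]
  rw [Finset.sum_comm]
  rw [show Finset.Icc 1 D = (Finset.range (D+1)).filter (fun j => 1 ≤ j) by
    ext j; simp [Finset.mem_Icc, Finset.mem_range, Finset.mem_filter]; omega]
  rw [Finset.sum_filter]
  refine Finset.sum_congr rfl (fun j hj => ?_)
  rw [Finset.mem_range] at hj
  by_cases h1j : 1 ≤ j
  · rw [if_pos h1j]
    rw [show Finset.range j = (Finset.range (D+1)).filter (fun t => t < j) by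
      ext t; simp [Finset.mem_range, Finset.mem_filter]; omega]
    rw [Finset.sum_filter, Finset.sum_mul]
    exact Finset.sum_congr rfl (fun t _ => by split_ifs <;> simp
    )
  · rw [if_neg h1j]
    have : j = 0 := by omega
    subst this
    simp

lemma groupinv_unique {V : Type} [Fintype V] [DecidableEq V]
    (G : SimpleGraph V) [DecidableRel G.Adj] (hconn : G.Connected)
    (Lsharp M : Matrix V V ℝ)
    (hLs1 : G.lapMatrix ℝ * Lsharp * G.lapMatrix ℝ = G.lapMatrix ℝ)
    (hLs2 : Lsharp * G.lapMatrix ℝ * Lsharp = Lsharp)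
    (hLs3 : G.lapMatrix ℝ * Lsharp = Lsharp * G.lapMatrix ℝ)
    (hLM : G.lapMatrix ℝ * M =
      Matrix.of (fun a b => (if a = b then (1:ℝ) else 0) - 1/(Fintype.card V : ℝ)))
    (hJM : ∀ b : V, ∑ a : V, M a b = 0) :
    Lsharp = M := by
  haveI : Nonempty V := hconn.nonempty
  set L := G.lapMatrix ℝ with hLdef
  set N : Matrix V V ℝ :=
    Matrix.of (fun a b => (if a = b then (1:ℝ) else 0) - 1/(Fintype.card V : ℝ)) with hNdef
  have hnne : (Fintype.card V : ℝ) ≠ 0 := by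
    exact_mod_cast Fintype.card_ne_zero
  have hsym : ∀ a b, L a b = L b a := by
    intro a b
    exact (G.isSymm_lapMatrix (R := ℝ)).apply b a
  have hrow : ∀ a, ∑ z, L a z = 0 := by
    intro a
    have h := congrFun (G.lapMatrix_mulVec_const_eq_zero (R := ℝ)) a
    simpa [Matrix.mulVec, dotProduct] using h
  have hcol : ∀ b, ∑ z, L z b = 0 := by
    intro b
    rw [Finset.sum_congr rfl (fun z _ => hsym z b)]
    exact hrow b
  have hker : ∀ q : V → ℝ, (∀ a, ∑ z, L a z * q z = 0) → ∀ a b, q a = q b := by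
    intro q hq a b
    have h0 : Matrix.toLin' L q = 0 := by
      ext w
      rw [Matrix.toLin'_apply]
      simpa [Matrix.mulVec, dotProduct] using hq w
    exact (G.lapMatrix_mulVec_eq_zero_iff_forall_reachable (x := q)).mp h0 a b (hconn a b)
  have hNcol : ∀ b, ∑ z, N z b = 0 := by
    intro b
    simp only [hNdef, Matrix.of_apply, Finset.sum_sub_distrib, Finset.sum_ite_eq',
      Finset.mem_univ, if_pos, Finset.sum_const, Finset.card_univ, nsmul_eq_mul]
    field_simp
    norm_num
  have hNrow : ∀ a, ∑ z, N a z = 0 := by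
    intro a
    simp only [hNdef, Matrix.of_apply, Finset.sum_sub_distrib, Finset.sum_ite_eq,
      Finset.mem_univ, if_pos, Finset.sum_const, Finset.card_univ, nsmul_eq_mul]
    field_simp
    norm_num
  have hNL : N * L = L := by
    ext a b
    rw [Matrix.mul_apply]
    have h1 : ∀ z, N a z * L z b
        = (if a = z then L z b else 0) - (1/(Fintype.card V : ℝ)) * L z b := by
      intro z; simp only [hNdef, Matrix.of_apply]; split_ifs <;> ring
    rw [Finset.sum_congr rfl (fun z _ => h1 z), Finset.sum_sub_distrib,
      Finset.sum_ite_eq, if_pos (Finset.mem_univ a), ← Finset.mul_sum, hcol,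
      mul_zero, sub_zero]
  have hLN : L * N = L := by
    ext a b
    rw [Matrix.mul_apply]
    have h1 : ∀ z, L a z * N z b
        = (if z = b then L a z else 0) - L a z * (1/(Fintype.card V : ℝ)) := by
      intro z; simp only [hNdef, Matrix.of_apply]; split_ifs <;> ring
    rw [Finset.sum_congr rfl (fun z _ => h1 z), Finset.sum_sub_distrib,
      Finset.sum_ite_eq', if_pos (Finset.mem_univ b), ← Finset.sum_mul, hrow,
      zero_mul, sub_zero]
  have hNM : N * M = M := by
    ext a b
    rw [Matrix.mul_apply]
    have h1 : ∀ z, N a z * M z b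
        = (if a = z then M z b else 0) - (1/(Fintype.card V : ℝ)) * M z b := by
      intro z; simp only [hNdef, Matrix.of_apply]; split_ifs <;> ring
    rw [Finset.sum_congr rfl (fun z _ => h1 z), Finset.sum_sub_distrib,
      Finset.sum_ite_eq, if_pos (Finset.mem_univ a), ← Finset.mul_sum, hJM,
      mul_zero, sub_zero]
  -- the projection L * Lsharp equals N
  have hLP : L * (L * Lsharp) = L := by
    rw [hLs3, ← Matrix.mul_assoc]
    exact hLs1
  have hPN : L * Lsharp = N := by
    set Q : Matrix V V ℝ := L * Lsharp - N with hQdef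
    have hQL : Q * L = 0 := by
      rw [hQdef, Matrix.sub_mul, hLs1, hNL, sub_self]
    have hLQ : L * Q = 0 := by
      rw [hQdef, Matrix.mul_sub, hLP, hLN, sub_self]
    have hrowconst : ∀ a z w, Q a z = Q a w := by
      intro a
      refine hker (fun z => Q a z) ?_
      intro w
      have h := congrFun (congrFun hQL a) w
      rw [Matrix.mul_apply] at h
      calc ∑ z, L w z * Q a z = ∑ z, Q a z * L z w := by
            exact Finset.sum_congr rfl (fun z _ => by rw [hsym w z, mul_comm])
        _ = 0 := h
    have hcolconst : ∀ b z w, Q z b = Q w b := by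
      intro b
      refine hker (fun z => Q z b) ?_
      intro w
      have h := congrFun (congrFun hLQ w) b
      rw [Matrix.mul_apply] at h
      exact h
    obtain ⟨a0⟩ := (inferInstance : Nonempty V)
    have hPcol : ∑ z, (L * Lsharp) z a0 = 0 := by
      have h1 : ∑ z, (L * Lsharp) z a0 = ∑ w, (∑ z, L z w) * Lsharp w a0 := by
        simp only [Matrix.mul_apply]
        rw [Finset.sum_comm]
        exact Finset.sum_congr rfl (fun w _ => by rw [Finset.sum_mul])
      rw [h1]
      simp only [hcol, zero_mul, Finset.sum_const_zero]
    have hQ00 : Q a0 a0 = 0 := by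
      have hs : ∑ z, Q z a0 = 0 := by
        rw [hQdef]
        simp only [Matrix.sub_apply, Finset.sum_sub_distrib]
        rw [hPcol, hNcol, sub_self]
      have hc : ∀ z, Q z a0 = Q a0 a0 := fun z => hcolconst a0 z a0
      rw [Finset.sum_congr rfl (fun z _ => hc z), Finset.sum_const, Finset.card_univ,
        nsmul_eq_mul] at hs
      rcases mul_eq_zero.mp hs with h | h
      · exact absurd h hnne
      · exact h
    have hQ0 : Q = 0 := by
      ext a b
      rw [(hrowconst a b a0), (hcolconst a0 a a0)]
      simpa using hQ00
    exact sub_eq_zero.mp hQ0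
  calc Lsharp = Lsharp * L * Lsharp := hLs2.symm
    _ = Lsharp * (L * Lsharp) := by rw [Matrix.mul_assoc]
    _ = Lsharp * N := by rw [hPN]
    _ = Lsharp * (L * M) := by rw [hLM]
    _ = Lsharp * L * M := by rw [Matrix.mul_assoc]
    _ = L * Lsharp * M := by rw [hLs3]
    _ = N * M := by rw [hPN]
    _ = M := hNM
theorem stmt13 {V : Type} [Fintype V] [DecidableEq V]
    (G : SimpleGraph V) [DecidableRel G.Adj]
    (hconn : G.Connected) (hcard : 2 ≤ Fintype.card V)
    (σ : V → Fin 2)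
    (hbip : ∀ x y : V, G.Adj x y → σ x ≠ σ y)
    (k : Fin 2 → ℕ)
    (hdeg : ∀ x : V, G.degree x = k (σ x))
    (c b : Fin 2 → ℕ → ℕ)
    (hc : ∀ (x y : V) (i : ℕ), G.dist x y = i →
      (Finset.univ.filter (fun z => G.dist x z = i - 1 ∧ G.Adj y z)).card = c (σ x) i)
    (hb : ∀ (x y : V) (i : ℕ), G.dist x y = i →
      (Finset.univ.filter (fun z => G.dist x z = i + 1 ∧ G.Adj y z)).card = b (σ x) i)
    (D : Fin 2 → ℕ)
    (hDub : ∀ x y : V, G.dist x y ≤ D (σ x))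
    (hDmax : ∀ ℓ : Fin 2, ∃ x y : V, σ x = ℓ ∧ G.dist x y = D ℓ)
    (hD0 : 1 ≤ D 0) (hD01 : D 0 ≤ D 1)
    (kk : Fin 2 → ℕ → ℕ)
    (hkk : ∀ (x : V) (i : ℕ),
      (Finset.univ.filter (fun y => G.dist x y = i)).card = kk (σ x) i)
    (Lsharp : Matrix V V ℝ)
    (hLs1 : G.lapMatrix ℝ * Lsharp * G.lapMatrix ℝ = G.lapMatrix ℝ)
    (hLs2 : Lsharp * G.lapMatrix ℝ * Lsharp = Lsharp)
    (hLs3 : G.lapMatrix ℝ * Lsharp = Lsharp * G.lapMatrix ℝ) :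
    ∀ x y : V,
      Lsharp x y =
        (1 / (Fintype.card V : ℝ)) *
          ∑ j ∈ Finset.Icc (G.dist x y + 1) (D (σ y)),
            ((Fintype.card V : ℝ) - ∑ t ∈ Finset.range j, (kk (σ y) t : ℝ)) /
              ((kk (σ y) j : ℝ) * (c (σ y) j : ℝ)) -
        (1 / (Fintype.card V : ℝ) ^ 2) *
          ∑ j ∈ Finset.Icc 1 (D (σ y)),
            ((∑ t ∈ Finset.range j, (kk (σ y) t : ℝ)) *
              ((Fintype.card V : ℝ) - ∑ t ∈ Finset.range j, (kk (σ y) t : ℝ))) /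
              ((kk (σ y) j : ℝ) * (c (σ y) j : ℝ)) := by
  set nR : ℝ := (Fintype.card V : ℝ) with hnR
  have hnpos : (0:ℝ) < nR := by rw [hnR]; exact_mod_cast lt_of_lt_of_le (by norm_num) hcard
  have hnne : nR ≠ 0 := ne_of_gt hnpos
  -- basic per-color facts
  have hD1 : ∀ m : Fin 2, 1 ≤ D m := by
    intro m; fin_cases m
    · exact hD0
    · exact hD0.trans hD01
  have hkkpos : ∀ (ℓ : Fin 2) (j : ℕ), j ≤ D ℓ → 1 ≤ kk ℓ j := by
    intro ℓ j hj
    obtain ⟨x₀, y₀, hx₀, hdm⟩ := hDmax ℓ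
    obtain ⟨z, hz, -⟩ := exists_intermediate hconn j x₀ y₀ (by omega)
    rw [← hx₀, ← hkk x₀ j]
    exact Finset.card_pos.mpr ⟨z, by simp [Finset.mem_filter, hz]⟩
  have hsphere : ∀ (y : V) (j : ℕ), j ≤ D (σ y) → ∃ z, G.dist y z = j := by
    intro y j hj
    have h1 := hkk y j
    have h2 := hkkpos (σ y) j hj
    rw [← h1] at h2
    obtain ⟨z, hz⟩ := Finset.card_pos.mp h2
    rw [Finset.mem_filter] at hz
    exact ⟨z, hz.2⟩
  have hcpos : ∀ (y : V) (j : ℕ), 1 ≤ j → j ≤ D (σ y) → 1 ≤ c (σ y) j := by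
    intro y j h1 h2
    obtain ⟨z, hz⟩ := hsphere y j h2
    obtain ⟨w, hadj, hw⟩ := closer_neighbor hconn y z (by omega)
    rw [← hc y z j hz]
    refine Finset.card_pos.mpr ⟨w, ?_⟩
    rw [Finset.mem_filter]
    exact ⟨Finset.mem_univ w, by omega, hadj⟩
  have hkk0 : ∀ y : V, kk (σ y) 0 = 1 := by
    intro y
    rw [← hkk y 0]
    rw [show Finset.univ.filter (fun z => G.dist y z = 0) = {y} by
      ext z
      simp only [Finset.mem_filter, Finset.mem_univ, true_and, Finset.mem_singleton]
      rw [hconn.dist_eq_zero_iff]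
      exact eq_comm]
    simp
  have hc0 : ∀ y : V, c (σ y) 0 = 0 := by
    intro y
    rw [← hc y y 0 (by simp)]
    rw [Finset.card_eq_zero, Finset.filter_eq_empty_iff]
    rintro z - ⟨h0, hadj⟩
    rw [show (0:ℕ) - 1 = 0 from rfl, hconn.dist_eq_zero_iff] at h0
    rw [← h0] at hadj
    exact G.irrefl hadj
  have hb0 : ∀ y : V, b (σ y) 0 = kk (σ y) 1 := by
    intro y
    rw [← hb y y 0 (by simp), ← hkk y 1]
    congr 1
    ext z
    simp only [Finset.mem_filter, Finset.mem_univ, true_and, zero_add]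
    constructor
    · rintro ⟨h1, -⟩; exact h1
    · intro h1; exact ⟨h1, by rwa [← dist_eq_one_iff_adj]⟩
  have hc1 : ∀ y : V, c (σ y) 1 = 1 := by
    intro y
    obtain ⟨z, hz⟩ := hsphere y 1 (hD1 (σ y))
    rw [← hc y z 1 hz]
    rw [show Finset.univ.filter (fun w => G.dist y w = 1 - 1 ∧ G.Adj z w) = {y} by
      ext w
      simp only [Finset.mem_filter, Finset.mem_univ, true_and, Finset.mem_singleton]
      constructor
      · rintro ⟨h0, -⟩
        rw [show (1:ℕ) - 1 = 0 from rfl, hconn.dist_eq_zero_iff] at h0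
        exact h0.symm
      · intro h0
        rw [h0]
        exact ⟨by simp, (dist_eq_one_iff_adj.mp hz).symm⟩]
    simp
  have hbD : ∀ y : V, b (σ y) (D (σ y)) = 0 := by
    intro y
    obtain ⟨z, hz⟩ := hsphere y (D (σ y)) le_rfl
    rw [← hb y z (D (σ y)) hz]
    rw [Finset.card_eq_zero, Finset.filter_eq_empty_iff]
    rintro w - ⟨h0, -⟩
    have := hDub y w
    omega
  have hcount : ∀ (y : V) (j : ℕ),
      kk (σ y) j * b (σ y) j = kk (σ y) (j+1) * c (σ y) (j+1) := by
    intro y j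
    have e1 : kk (σ y) j * b (σ y) j
        = ∑ u : V, ∑ v : V,
            if G.dist y u = j ∧ (G.dist y v = j + 1 ∧ G.Adj u v) then 1 else 0 := by
      rw [← hkk y j]
      calc (Finset.univ.filter (fun u => G.dist y u = j)).card * b (σ y) j
          = ∑ u ∈ Finset.univ.filter (fun u => G.dist y u = j), b (σ y) j := by
            rw [Finset.sum_const, smul_eq_mul]
        _ = ∑ u ∈ Finset.univ.filter (fun u => G.dist y u = j),
              ∑ v : V, if G.dist y v = j + 1 ∧ G.Adj u v then 1 else 0 := by
            refine Finset.sum_congr rfl fun u hu => ?_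
            rw [Finset.mem_filter] at hu
            rw [← hb y u j hu.2, Finset.card_filter]
        _ = ∑ u : V, if G.dist y u = j then
              (∑ v : V, if G.dist y v = j + 1 ∧ G.Adj u v then 1 else 0) else 0 :=
            Finset.sum_filter _ _
        _ = _ := by
            refine Finset.sum_congr rfl fun u _ => ?_
            by_cases h : G.dist y u = j <;> simp [h]
    have e2 : kk (σ y) (j+1) * c (σ y) (j+1)
        = ∑ v : V, ∑ u : V,
            if G.dist y v = j + 1 ∧ (G.dist y u = j ∧ G.Adj v u) then 1 else 0 := by
      rw [← hkk y (j+1)]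
      calc (Finset.univ.filter (fun v => G.dist y v = j+1)).card * c (σ y) (j+1)
          = ∑ v ∈ Finset.univ.filter (fun v => G.dist y v = j+1), c (σ y) (j+1) := by
            rw [Finset.sum_const, smul_eq_mul]
        _ = ∑ v ∈ Finset.univ.filter (fun v => G.dist y v = j+1),
              ∑ u : V, if G.dist y u = j + 1 - 1 ∧ G.Adj v u then 1 else 0 := by
            refine Finset.sum_congr rfl fun v hv => ?_
            rw [Finset.mem_filter] at hv
            rw [← hc y v (j+1) hv.2, Finset.card_filter]
        _ = ∑ v ∈ Finset.univ.filter (fun v => G.dist y v = j+1),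
              ∑ u : V, if G.dist y u = j ∧ G.Adj v u then 1 else 0 := by
            simp
        _ = ∑ v : V, if G.dist y v = j + 1 then
              (∑ u : V, if G.dist y u = j ∧ G.Adj v u then 1 else 0) else 0 :=
            Finset.sum_filter _ _
        _ = _ := by
            refine Finset.sum_congr rfl fun v _ => ?_
            by_cases h : G.dist y v = j + 1 <;> simp [h]
    rw [e1, e2, Finset.sum_comm]
    refine Finset.sum_congr rfl fun u _ => Finset.sum_congr rfl fun v _ => ?_
    refine if_congr ⟨fun ⟨h1, h2, h3⟩ => ⟨h2, h1, h3.symm⟩,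
      fun ⟨h1, h2, h3⟩ => ⟨h2, h1, h3.symm⟩⟩ rfl rfl
  have hBD : ∀ y : V, ∑ t ∈ Finset.range (D (σ y) + 1), kk (σ y) t = Fintype.card V := by
    intro y
    have h := Finset.card_eq_sum_card_fiberwise
      (f := fun z => G.dist y z) (s := Finset.univ) (t := Finset.range (D (σ y) + 1))
      (fun z _ => Finset.mem_range.mpr (show G.dist y z < D (σ y) + 1 by have := hDub y z; omega))
    rw [Finset.card_univ] at h
    rw [h]
    exact (Finset.sum_congr rfl fun i _ => hkk y i).symm
  -- real-cast positivity
  have hkkRne : ∀ (ℓ : Fin 2) (j : ℕ), j ≤ D ℓ → (kk ℓ j : ℝ) ≠ 0 := fun ℓ j hj =>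
    Nat.cast_ne_zero.mpr (by have := hkkpos ℓ j hj; omega)
  have hcRne : ∀ (y : V) (j : ℕ), 1 ≤ j → j ≤ D (σ y) → (c (σ y) j : ℝ) ≠ 0 :=
    fun y j h1 h2 => Nat.cast_ne_zero.mpr (by have := hcpos y j h1 h2; omega)
  -- the candidate matrix
  set gg : Fin 2 → ℕ → ℝ := fun ℓ j =>
    (nR - ∑ t ∈ Finset.range j, (kk ℓ t : ℝ)) / ((kk ℓ j : ℝ) * (c ℓ j : ℝ)) with hgg
  set CC : Fin 2 → ℝ := fun ℓ => (1 / nR ^ 2) *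
    ∑ j ∈ Finset.Icc 1 (D ℓ),
      ((∑ t ∈ Finset.range j, (kk ℓ t : ℝ)) * (nR - ∑ t ∈ Finset.range j, (kk ℓ t : ℝ))) /
        ((kk ℓ j : ℝ) * (c ℓ j : ℝ)) with hCC
  set M : Matrix V V ℝ := Matrix.of (fun x y =>
    (1 / nR) * ∑ j ∈ Finset.Icc (G.dist x y + 1) (D (σ y)), gg (σ y) j - CC (σ y)) with hM
  have key : ∀ x y : V, (G.lapMatrix ℝ * M) x y = (if x = y then (1:ℝ) else 0) - 1/nR := by
    intro x y
    have hyx : G.dist y x = G.dist x y := SimpleGraph.dist_comm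
    set d := G.dist x y with hd
    set ℓ := σ y with hℓ
    set F : ℕ → ℝ := fun i => ∑ j ∈ Finset.Icc (i+1) (D ℓ), gg ℓ j with hF
    have hMzy : ∀ z : V, M z y = (1/nR) * F (G.dist z y) - CC ℓ := fun z => rfl
    have entry : (G.lapMatrix ℝ * M) x y
        = (G.degree x : ℝ) * M x y - ∑ z ∈ G.neighborFinset x, M z y := by
      rw [show G.lapMatrix ℝ = G.degMatrix ℝ - G.adjMatrix ℝ from rfl, Matrix.sub_mul,
        Matrix.sub_apply, adjMatrix_mul_apply]
      congr 1
      rw [degMatrix, Matrix.diagonal_mul]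
    set A := Finset.univ.filter (fun z => G.dist y z = d - 1 ∧ G.Adj x z) with hA
    set B := Finset.univ.filter (fun z => G.dist y z = d + 1 ∧ G.Adj x z) with hB
    have hAc : A.card = c ℓ d := hc y x d hyx
    have hBc : B.card = b ℓ d := hb y x d hyx
    have hdisj : Disjoint A B := by
      rw [Finset.disjoint_left]
      intro z hz1 hz2
      rw [hA, Finset.mem_filter] at hz1
      rw [hB, Finset.mem_filter] at hz2
      omega
    have hpart : G.neighborFinset x = A ∪ B := by
      ext z
      simp only [mem_neighborFinset, hA, hB, Finset.mem_union, Finset.mem_filter,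
        Finset.mem_univ, true_and]
      constructor
      · intro hadj
        rcases dist_step hbip hconn y x z hadj with h | h
        · right; exact ⟨by omega, hadj⟩
        · left; exact ⟨by omega, hadj⟩
      · rintro (⟨-, h⟩ | ⟨-, h⟩) <;> exact h
    have hsumA : ∑ z ∈ A, M z y = (c ℓ d : ℝ) * ((1/nR) * F (d-1) - CC ℓ) := by
      have h1 : ∀ z ∈ A, M z y = ((1/nR) * F (d-1) - CC ℓ) := by
        intro z hz
        rw [hA, Finset.mem_filter] at hz
        rw [hMzy z, show G.dist z y = d - 1 from
          (SimpleGraph.dist_comm (G:=G) (u:=z) (v:=y)).trans hz.2.1]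
      rw [Finset.sum_congr rfl h1, Finset.sum_const, hAc, nsmul_eq_mul]
    have hsumB : ∑ z ∈ B, M z y = (b ℓ d : ℝ) * ((1/nR) * F (d+1) - CC ℓ) := by
      have h1 : ∀ z ∈ B, M z y = ((1/nR) * F (d+1) - CC ℓ) := by
        intro z hz
        rw [hB, Finset.mem_filter] at hz
        rw [hMzy z, show G.dist z y = d + 1 from
          (SimpleGraph.dist_comm (G:=G) (u:=z) (v:=y)).trans hz.2.1]
      rw [Finset.sum_congr rfl h1, Finset.sum_const, hBc, nsmul_eq_mul]
    have hdegR : (G.degree x : ℝ) = (c ℓ d : ℝ) + (b ℓ d : ℝ) := by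
      have h1 : G.degree x = c ℓ d + b ℓ d := by
        rw [← hAc, ← hBc, ← Finset.card_union_of_disjoint hdisj, ← hpart,
          card_neighborFinset_eq_degree]
      exact_mod_cast congrArg (Nat.cast : ℕ → ℝ) h1
    have hdD : d ≤ D ℓ := hyx ▸ hDub y x
    rw [entry, hpart, Finset.sum_union hdisj, hsumA, hsumB, hMzy x, ← hd, hdegR]
    by_cases hd0 : d = 0
    · -- diagonal case
      have hxy : x = y := hconn.dist_eq_zero_iff.mp (hd ▸ hd0)
      rw [if_pos hxy, hd0]
      have hIcc : Finset.Icc 1 (D ℓ) = insert 1 (Finset.Icc 2 (D ℓ)) := by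
        ext t
        simp only [Finset.mem_Icc, Finset.mem_insert]
        have := hD1 ℓ
        omega
      have hF01 : F 0 = gg ℓ 1 + F 1 := by
        show (∑ j ∈ Finset.Icc (0+1) (D ℓ), gg ℓ j) = gg ℓ 1 + ∑ j ∈ Finset.Icc (1+1) (D ℓ), gg ℓ j
        norm_num [hIcc, Finset.sum_insert (by simp : (1:ℕ) ∉ Finset.Icc 2 (D ℓ))]
      have hgg1 : gg ℓ 1 = (nR - 1) / ((kk ℓ 1 : ℝ) * 1) := by
        rw [hgg]
        simp only [Finset.sum_range_one]
        rw [hkk0 y, hc1 y]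
        norm_num
      have hb0' : (b ℓ 0 : ℝ) = (kk ℓ 1 : ℝ) := by rw [hℓ]; exact_mod_cast hb0 y
      have hc0' : (c ℓ 0 : ℝ) = 0 := by rw [hℓ]; exact_mod_cast hc0 y
      have hkk1ne : (kk ℓ 1 : ℝ) ≠ 0 := hkkRne ℓ 1 (hD1 ℓ)
      have hF0m1 : F (0 - 1) = F 0 := rfl
      have hF0p1 : F (0 + 1) = F 1 := rfl
      rw [hF0m1, hF0p1, hc0', hb0', hF01, hgg1]
      field_simp
      ring
    · -- off-diagonal
      have hxy : x ≠ y := by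
        intro h
        rw [h] at hd
        simp [SimpleGraph.dist_self] at hd
        omega
      rw [if_neg hxy]
      have hFdm1 : F (d - 1) = gg ℓ d + F d := by
        have h1 : (d-1)+1 = d := by omega
        show (∑ j ∈ Finset.Icc ((d-1)+1) (D ℓ), gg ℓ j) = gg ℓ d + ∑ j ∈ Finset.Icc (d+1) (D ℓ), gg ℓ j
        rw [h1, show Finset.Icc d (D ℓ) = insert d (Finset.Icc (d+1) (D ℓ)) by
            ext t; simp only [Finset.mem_Icc, Finset.mem_insert]; omega,
          Finset.sum_insert (by simp)]
      by_cases hdD2 : d = D ℓ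
      · -- outermost sphere
        have hFd : F d = 0 := by
          show (∑ j ∈ Finset.Icc (d+1) (D ℓ), gg ℓ j) = 0
          rw [Finset.Icc_eq_empty (by omega), Finset.sum_empty]
        have hFd1 : F (d + 1) = 0 := by
          show (∑ j ∈ Finset.Icc (d+1+1) (D ℓ), gg ℓ j) = 0
          rw [Finset.Icc_eq_empty (by omega), Finset.sum_empty]
        have hbD' : (b ℓ d : ℝ) = 0 := by
          rw [hdD2, hℓ]
          exact_mod_cast hbD y
        have hkkD : (nR - ∑ t ∈ Finset.range d, (kk ℓ t : ℝ)) = (kk ℓ d : ℝ) := by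
          have h1 := hBD y
          rw [← hℓ] at h1
          have h2 : ((∑ t ∈ Finset.range (D ℓ + 1), kk ℓ t : ℕ) : ℝ) = nR := by
            rw [h1, hnR]
          push_cast at h2
          rw [Finset.sum_range_succ] at h2
          rw [hdD2]
          linarith
        have hggd : gg ℓ d = (kk ℓ d : ℝ) / ((kk ℓ d : ℝ) * (c ℓ d : ℝ)) := by
          show (nR - ∑ t ∈ Finset.range d, (kk ℓ t : ℝ)) / ((kk ℓ d : ℝ) * (c ℓ d : ℝ)) = _
          rw [hkkD]
        have hkkdne : (kk ℓ d : ℝ) ≠ 0 := hkkRne ℓ d hdD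
        have hcdne : (c ℓ d : ℝ) ≠ 0 := hcRne y d (by omega) hdD
        rw [hFdm1, hFd, hFd1, hbD', hggd]
        field_simp
        ring
      · -- intermediate sphere
        have hd1D : d + 1 ≤ D ℓ := by omega
        have hFd : F d = gg ℓ (d+1) + F (d+1) := by
          show (∑ j ∈ Finset.Icc (d+1) (D ℓ), gg ℓ j)
            = gg ℓ (d+1) + ∑ j ∈ Finset.Icc (d+1+1) (D ℓ), gg ℓ j
          rw [show Finset.Icc (d+1) (D ℓ) = insert (d+1) (Finset.Icc (d+1+1) (D ℓ)) by
              ext t; simp only [Finset.mem_Icc, Finset.mem_insert]; omega,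
            Finset.sum_insert (by simp)]
        have hbpos : 1 ≤ b ℓ d := by
          have h := hcount y d
          rw [← hℓ] at h
          have h1 := hkkpos ℓ (d+1) hd1D
          have h2 := hcpos y (d+1) (by omega) hd1D
          rw [← hℓ] at h2
          have h3 := hkkpos ℓ d hdD
          rcases Nat.eq_zero_or_pos (b ℓ d) with h0 | h0
          · rw [h0, Nat.mul_zero] at h
            have := Nat.mul_pos (show 0 < kk ℓ (d+1) by omega) (show 0 < c ℓ (d+1) by omega)
            omega
          · omega
        have hkkdne : (kk ℓ d : ℝ) ≠ 0 := hkkRne ℓ d hdD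
        have hcdne : (c ℓ d : ℝ) ≠ 0 := hcRne y d (by omega) hdD
        have hbdne : (b ℓ d : ℝ) ≠ 0 := Nat.cast_ne_zero.mpr (by omega)
        have hcnt : (kk ℓ d : ℝ) * (b ℓ d : ℝ) = (kk ℓ (d+1) : ℝ) * (c ℓ (d+1) : ℝ) := by
          rw [hℓ]
          exact_mod_cast hcount y d
        have hBsucc : (∑ t ∈ Finset.range (d+1), (kk ℓ t : ℝ))
            = (∑ t ∈ Finset.range d, (kk ℓ t : ℝ)) + (kk ℓ d : ℝ) := Finset.sum_range_succ _ _
        have e1 : (c ℓ d : ℝ) * gg ℓ d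
            = (nR - ∑ t ∈ Finset.range d, (kk ℓ t : ℝ)) / (kk ℓ d : ℝ) := by
          show (c ℓ d : ℝ) * ((nR - ∑ t ∈ Finset.range d, (kk ℓ t : ℝ))
            / ((kk ℓ d : ℝ) * (c ℓ d : ℝ))) = _
          field_simp
        have e2 : (b ℓ d : ℝ) * gg ℓ (d+1)
            = (nR - (∑ t ∈ Finset.range d, (kk ℓ t : ℝ)) - (kk ℓ d : ℝ)) / (kk ℓ d : ℝ) := by
          show (b ℓ d : ℝ) * ((nR - ∑ t ∈ Finset.range (d+1), (kk ℓ t : ℝ))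
            / ((kk ℓ (d+1) : ℝ) * (c ℓ (d+1) : ℝ))) = _
          rw [hBsucc, ← hcnt]
          field_simp
          ring
        rw [hFdm1, hFd]
        have expand : ((c ℓ d : ℝ) + (b ℓ d : ℝ)) * ((1/nR) * (gg ℓ (d+1) + F (d+1)) - CC ℓ)
            - ((c ℓ d : ℝ) * ((1/nR) * (gg ℓ d + (gg ℓ (d+1) + F (d+1))) - CC ℓ)
              + (b ℓ d : ℝ) * ((1/nR) * F (d+1) - CC ℓ))
            = (1/nR) * ((b ℓ d : ℝ) * gg ℓ (d+1) - (c ℓ d : ℝ) * gg ℓ d) := by ring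
        rw [expand, e1, e2]
        field_simp
        ring
  have hJM : ∀ y0 : V, ∑ a : V, M a y0 = 0 := by
    intro y
    set ℓ := σ y with hℓ
    set F : ℕ → ℝ := fun i => ∑ j ∈ Finset.Icc (i+1) (D ℓ), gg ℓ j with hF
    have hMx : ∀ x : V, M x y = (1/nR) * F (G.dist x y) - CC ℓ := fun x => rfl
    have hfib : ∑ x : V, F (G.dist x y)
        = ∑ t ∈ Finset.range (D ℓ + 1), (kk ℓ t : ℝ) * ∑ j ∈ Finset.Icc (t+1) (D ℓ), gg ℓ j := by
      have hmaps : ∀ x ∈ (Finset.univ : Finset V), G.dist y x ∈ Finset.range (D ℓ + 1) := by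
        intro x _
        refine Finset.mem_range.mpr ?_
        have h := hDub y x
        rw [← hℓ] at h
        omega
      have h := Finset.sum_fiberwise_of_maps_to' (t := Finset.range (D ℓ + 1))
        (g := fun x : V => G.dist y x) hmaps (fun t => F t)
      calc ∑ x : V, F (G.dist x y) = ∑ x : V, F (G.dist y x) := by
            refine Finset.sum_congr rfl fun x _ => ?_
            rw [SimpleGraph.dist_comm (G:=G) (u:=x) (v:=y)]
        _ = ∑ t ∈ Finset.range (D ℓ + 1),
              ∑ x ∈ Finset.univ.filter (fun x => G.dist y x = t), F t := h.symm
        _ = _ := by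
            refine Finset.sum_congr rfl fun t _ => ?_
            rw [Finset.sum_const, nsmul_eq_mul]
            congr 1
            have h2 := hkk y t
            rw [← hℓ] at h2
            exact_mod_cast h2
    have hswap := swap_sum (D ℓ) (fun t => (kk ℓ t : ℝ)) (fun j => gg ℓ j)
    calc ∑ a : V, M a y = ∑ a : V, ((1/nR) * F (G.dist a y) - CC ℓ) :=
          Finset.sum_congr rfl fun a _ => hMx a
      _ = (1/nR) * (∑ a : V, F (G.dist a y)) - nR * CC ℓ := by
          rw [Finset.sum_sub_distrib, ← Finset.mul_sum, Finset.sum_const, Finset.card_univ,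
            nsmul_eq_mul]
      _ = (1/nR) * (∑ j ∈ Finset.Icc 1 (D ℓ),
            (∑ t ∈ Finset.range j, (kk ℓ t : ℝ)) * gg ℓ j) - nR * CC ℓ := by
          rw [hfib, hswap]
      _ = 0 := by
          have hCCs : nR * CC ℓ = nR * ((1 / nR ^ 2) * ∑ j ∈ Finset.Icc 1 (D ℓ),
              (∑ t ∈ Finset.range j, (kk ℓ t : ℝ)) * gg ℓ j) := by
            have h1 : ∀ j ∈ Finset.Icc 1 (D ℓ),
                ((∑ t ∈ Finset.range j, (kk ℓ t : ℝ)) *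
                  (nR - ∑ t ∈ Finset.range j, (kk ℓ t : ℝ))) /
                  ((kk ℓ j : ℝ) * (c ℓ j : ℝ))
                = (∑ t ∈ Finset.range j, (kk ℓ t : ℝ)) * gg ℓ j := by
              intro j _
              rw [mul_div_assoc]
            show nR * ((1 / nR ^ 2) * ∑ j ∈ Finset.Icc 1 (D ℓ),
              ((∑ t ∈ Finset.range j, (kk ℓ t : ℝ)) *
                (nR - ∑ t ∈ Finset.range j, (kk ℓ t : ℝ))) /
                ((kk ℓ j : ℝ) * (c ℓ j : ℝ))) = _
            rw [Finset.sum_congr rfl h1]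
          rw [hCCs]
          field_simp
          ring
  have hLM' : G.lapMatrix ℝ * M = Matrix.of (fun a b0 =>
      (if a = b0 then (1:ℝ) else 0) - 1/(Fintype.card V : ℝ)) := by
    ext a b0
    rw [Matrix.of_apply]
    exact key a b0
  have hfinal := groupinv_unique G hconn Lsharp M hLs1 hLs2 hLs3 hLM' hJM
  intro x y
  rw [hfinal]
  show (1/nR) * ∑ j ∈ Finset.Icc (G.dist x y + 1) (D (σ y)), gg (σ y) j - CC (σ y) = _
  simp only [hgg, hCC]
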